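/- Let n = 4, let B_1, B_2, B_3, B_4 ∈ ℝ² be points no three of which are collinear, t_1,…,t_4 ∈ ℝ \ {0,1}, A_i := t_i·B_{i−1} + (1−t_i)·B_i (with B_0 = B_4). Suppose A_2 ≠ A_3, A_4 ≠ A_1, B_1 ≠ B_3, and the lines through A_2, A_3 and through A_4, A_1 are distinct and not parallel. Then ∏_{i=1}^4 (1−t_i)/t_i = 1 if and only if the three lines through B_1 and B_3, through A_2 and A_3, and through A_4 and A_1 have a common point (Desargues configuration). -/

import Mathlib

open Matrix

lemma exists_smul_of_cross_eq_zero {v w : Fin 2 → ℝ} (hw : w ≠ 0)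
    (h : v 0 * w 1 - v 1 * w 0 = 0) : ∃ c : ℝ, c • w = v := by
  have hw' : w 0 ≠ 0 ∨ w 1 ≠ 0 := by
    by_contra hc
    push_neg at hc
    exact hw (funext fun i => by fin_cases i <;> simp [hc.1, hc.2])
  rcases hw' with h0 | h1
  · refine ⟨v 0 / w 0, funext fun i => ?_⟩
    fin_cases i <;> simp only [Pi.smul_apply, smul_eq_mul, Fin.zero_eta, Fin.mk_one] <;> field_simp <;>
      linear_combination h
  · refine ⟨v 1 / w 1, funext fun i => ?_⟩
    fin_cases i <;> simp only [Pi.smul_apply, smul_eq_mul, Fin.zero_eta, Fin.mk_one] <;> field_simp <;>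
      linear_combination -h

lemma mem_line_iff {X Y : Fin 2 → ℝ} (h : X ≠ Y) (P : Fin 2 → ℝ) :
    P ∈ affineSpan ℝ ({X, Y} : Set (Fin 2 → ℝ)) ↔
      (P 0 - X 0) * (Y 1 - X 1) - (P 1 - X 1) * (Y 0 - X 0) = 0 := by
  have hX : X ∈ affineSpan ℝ ({X, Y} : Set (Fin 2 → ℝ)) := left_mem_affineSpan_pair ℝ X Y
  rw [← AffineSubspace.vsub_right_mem_direction_iff_mem hX, direction_affineSpan,
      mem_vectorSpan_pair_rev]
  constructor
  · rintro ⟨r, hr⟩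
    have h0 := congrFun hr 0
    have h1 := congrFun hr 1
    simp only [vsub_eq_sub, Pi.smul_apply, Pi.sub_apply, smul_eq_mul] at h0 h1
    linear_combination (Y 0 - X 0) * h1 - (Y 1 - X 1) * h0
  · intro h'
    obtain ⟨c, hc⟩ := exists_smul_of_cross_eq_zero (v := P - X) (w := Y - X)
      (sub_ne_zero_of_ne (Ne.symm h)) (by simpa using h')
    exact ⟨c, by simpa [vsub_eq_sub] using hc⟩

lemma collinear_of_cross {X Y Z : Fin 2 → ℝ}
    (h : (Y 0 - X 0) * (Z 1 - X 1) - (Y 1 - X 1) * (Z 0 - X 0) = 0) :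
    Collinear ℝ ({X, Y, Z} : Set (Fin 2 → ℝ)) := by
  by_cases hXY : X = Y
  · subst hXY
    have hs : ({X, X, Z} : Set (Fin 2 → ℝ)) = {X, Z} := by simp
    rw [hs]
    exact collinear_pair ℝ X Z
  · have hZ : Z ∈ affineSpan ℝ ({X, Y} : Set (Fin 2 → ℝ)) :=
      (mem_line_iff hXY Z).mpr (by linear_combination -h)
    have hcol := collinear_insert_of_mem_affineSpan_pair hZ
    exact hcol.subset (by intro p hp; simp at hp ⊢; tauto)

lemma parallel_of_cross {A₂ A₃ A₄ A₁ : Fin 2 → ℝ} (h23 : A₂ ≠ A₃) (h41 : A₄ ≠ A₁)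
    (h : (A₃ 0 - A₂ 0) * (A₁ 1 - A₄ 1) - (A₃ 1 - A₂ 1) * (A₁ 0 - A₄ 0) = 0) :
    AffineSubspace.Parallel (affineSpan ℝ ({A₂, A₃} : Set (Fin 2 → ℝ)))
      (affineSpan ℝ ({A₄, A₁} : Set (Fin 2 → ℝ))) := by
  rw [AffineSubspace.parallel_iff_direction_eq_and_eq_bot_iff_eq_bot]
  constructor
  · rw [direction_affineSpan, direction_affineSpan, vectorSpan_pair_rev, vectorSpan_pair_rev]
    have hw : (A₁ - A₄ : Fin 2 → ℝ) ≠ 0 := sub_ne_zero_of_ne (Ne.symm h41)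
    obtain ⟨c, hc⟩ := exists_smul_of_cross_eq_zero (v := A₃ - A₂) (w := A₁ - A₄) hw
      (by simpa using h)
    have hc0 : c ≠ 0 := by
      rintro rfl
      exact sub_ne_zero_of_ne (Ne.symm h23) (by rw [← hc]; simp)
    apply le_antisymm
    · rw [Submodule.span_singleton_le_iff_mem]
      exact Submodule.mem_span_singleton.mpr ⟨c, by simpa [vsub_eq_sub] using hc⟩
    · rw [Submodule.span_singleton_le_iff_mem]
      refine Submodule.mem_span_singleton.mpr ⟨c⁻¹, ?_⟩
      have : A₃ -ᵥ A₂ = c • (A₁ -ᵥ A₄) := by simpa [vsub_eq_sub] using hc.symm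
      rw [this, smul_smul, inv_mul_cancel₀ hc0, one_smul]
  · simp only [affineSpan_eq_bot]
    exact iff_of_false (Set.insert_nonempty _ _).ne_empty (Set.insert_nonempty _ _).ne_empty

lemma master (x1 y1 x2 y2 x3 y3 x4 y4 t1 t2 t3 t4 p0 p1
    a1x a1y a2x a2y a3x a3y a4x a4y : ℝ)
    (ha1x : a1x = t1 * x4 + (1 - t1) * x1) (ha1y : a1y = t1 * y4 + (1 - t1) * y1)
    (ha2x : a2x = t2 * x1 + (1 - t2) * x2) (ha2y : a2y = t2 * y1 + (1 - t2) * y2)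
    (ha3x : a3x = t3 * x2 + (1 - t3) * x3) (ha3y : a3y = t3 * y2 + (1 - t3) * y3)
    (ha4x : a4x = t4 * x3 + (1 - t4) * x4) (ha4y : a4y = t4 * y3 + (1 - t4) * y4) :
    ((a3x - a2x) * (a1y - a4y) - (a3y - a2y) * (a1x - a4x)) *
        ((p0 - x1) * (y3 - y1) - (p1 - y1) * (x3 - x1))
      - ((x3 - x1) * (a1y - a4y) - (y3 - y1) * (a1x - a4x)) *
        ((p0 - a2x) * (a3y - a2y) - (p1 - a2y) * (a3x - a2x))
      - ((a3x - a2x) * (y3 - y1) - (a3y - a2y) * (x3 - x1)) *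
        ((p0 - a4x) * (a1y - a4y) - (p1 - a4y) * (a1x - a4x))
    = -((1 - t1) * (1 - t2) * (1 - t3) * (1 - t4) - t1 * t2 * t3 * t4) *
        ((x2 - x1) * (y3 - y1) - (y2 - y1) * (x3 - x1)) *
        ((x3 - x1) * (y4 - y1) - (y3 - y1) * (x4 - x1)) := by
  subst ha1x ha1y ha2x ha2y ha3x ha3y ha4x ha4y
  ring

set_option maxRecDepth 16000 in
set_option maxHeartbeats 2000000 in
/-- **Desargues configuration.**  For four planar points `B₁,…,B₄`, no three of which
are collinear, and `Aᵢ = tᵢ B_{i-1} + (1 - tᵢ) Bᵢ` (indices mod 4), the product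
`∏ᵢ (1 - tᵢ)/tᵢ` equals `1` iff the lines `B₁B₃`, `A₂A₃` and `A₄A₁` are concurrent. -/
theorem stmt5 (B₁ B₂ B₃ B₄ : Fin 2 → ℝ) (t₁ t₂ t₃ t₄ : ℝ)
    (hB123 : ¬ Collinear ℝ ({B₁, B₂, B₃} : Set (Fin 2 → ℝ)))
    (hB124 : ¬ Collinear ℝ ({B₁, B₂, B₄} : Set (Fin 2 → ℝ)))
    (hB134 : ¬ Collinear ℝ ({B₁, B₃, B₄} : Set (Fin 2 → ℝ)))
    (hB234 : ¬ Collinear ℝ ({B₂, B₃, B₄} : Set (Fin 2 → ℝ)))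
    (ht₁0 : t₁ ≠ 0) (ht₁1 : t₁ ≠ 1) (ht₂0 : t₂ ≠ 0) (ht₂1 : t₂ ≠ 1)
    (ht₃0 : t₃ ≠ 0) (ht₃1 : t₃ ≠ 1) (ht₄0 : t₄ ≠ 0) (ht₄1 : t₄ ≠ 1)
    (A₁ A₂ A₃ A₄ : Fin 2 → ℝ)
    (hA₁ : A₁ = t₁ • B₄ + (1 - t₁) • B₁)
    (hA₂ : A₂ = t₂ • B₁ + (1 - t₂) • B₂)
    (hA₃ : A₃ = t₃ • B₂ + (1 - t₃) • B₃)
    (hA₄ : A₄ = t₄ • B₃ + (1 - t₄) • B₄)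
    (hA23 : A₂ ≠ A₃) (hA41 : A₄ ≠ A₁) (hB13 : B₁ ≠ B₃)
    (hlines_ne : affineSpan ℝ ({A₂, A₃} : Set (Fin 2 → ℝ)) ≠
      affineSpan ℝ ({A₄, A₁} : Set (Fin 2 → ℝ)))
    (hnp : ¬ AffineSubspace.Parallel
      (affineSpan ℝ ({A₂, A₃} : Set (Fin 2 → ℝ)))
      (affineSpan ℝ ({A₄, A₁} : Set (Fin 2 → ℝ)))) :
    ((1 - t₁) / t₁) * ((1 - t₂) / t₂) * ((1 - t₃) / t₃) * ((1 - t₄) / t₄) = 1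
    ↔ ∃ P : Fin 2 → ℝ,
        P ∈ affineSpan ℝ ({B₁, B₃} : Set (Fin 2 → ℝ)) ∧
        P ∈ affineSpan ℝ ({A₂, A₃} : Set (Fin 2 → ℝ)) ∧
        P ∈ affineSpan ℝ ({A₄, A₁} : Set (Fin 2 → ℝ)) := by
  have hA₁0 : A₁ 0 = t₁ * B₄ 0 + (1 - t₁) * B₁ 0 := by rw [hA₁]; simp
  have hA₁1 : A₁ 1 = t₁ * B₄ 1 + (1 - t₁) * B₁ 1 := by rw [hA₁]; simp
  have hA₂0 : A₂ 0 = t₂ * B₁ 0 + (1 - t₂) * B₂ 0 := by rw [hA₂]; simp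
  have hA₂1 : A₂ 1 = t₂ * B₁ 1 + (1 - t₂) * B₂ 1 := by rw [hA₂]; simp
  have hA₃0 : A₃ 0 = t₃ * B₂ 0 + (1 - t₃) * B₃ 0 := by rw [hA₃]; simp
  have hA₃1 : A₃ 1 = t₃ * B₂ 1 + (1 - t₃) * B₃ 1 := by rw [hA₃]; simp
  have hA₄0 : A₄ 0 = t₄ * B₃ 0 + (1 - t₄) * B₄ 0 := by rw [hA₄]; simp
  have hA₄1 : A₄ 1 = t₄ * B₃ 1 + (1 - t₄) * B₄ 1 := by rw [hA₄]; simp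
  have hd123 : (B₂ 0 - B₁ 0) * (B₃ 1 - B₁ 1) - (B₂ 1 - B₁ 1) * (B₃ 0 - B₁ 0) ≠ 0 :=
    fun h => hB123 (collinear_of_cross h)
  have hd134 : (B₃ 0 - B₁ 0) * (B₄ 1 - B₁ 1) - (B₃ 1 - B₁ 1) * (B₄ 0 - B₁ 0) ≠ 0 :=
    fun h => hB134 (collinear_of_cross h)
  have hD : (A₃ 0 - A₂ 0) * (A₁ 1 - A₄ 1) - (A₃ 1 - A₂ 1) * (A₁ 0 - A₄ 0) ≠ 0 :=
    fun h => hnp (parallel_of_cross hA23 hA41 h)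
  have hDexp := hD
  rw [hA₁0, hA₁1, hA₂0, hA₂1, hA₃0, hA₃1, hA₄0, hA₄1] at hDexp
  have hmaster := fun p0 p1 =>
    master (B₁ 0) (B₁ 1) (B₂ 0) (B₂ 1) (B₃ 0) (B₃ 1) (B₄ 0) (B₄ 1) t₁ t₂ t₃ t₄ p0 p1
      (t₁ * B₄ 0 + (1 - t₁) * B₁ 0) (t₁ * B₄ 1 + (1 - t₁) * B₁ 1)
      (t₂ * B₁ 0 + (1 - t₂) * B₂ 0) (t₂ * B₁ 1 + (1 - t₂) * B₂ 1)
      (t₃ * B₂ 0 + (1 - t₃) * B₃ 0) (t₃ * B₂ 1 + (1 - t₃) * B₃ 1)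
      (t₄ * B₃ 0 + (1 - t₄) * B₄ 0) (t₄ * B₃ 1 + (1 - t₄) * B₄ 1)
      rfl rfl rfl rfl rfl rfl rfl rfl
  constructor
  · intro hprod
    have hprod' : (1 - t₁) * (1 - t₂) * (1 - t₃) * (1 - t₄) = t₁ * t₂ * t₃ * t₄ := by
      field_simp at hprod
      linear_combination hprod
    set s : ℝ := ((A₄ 0 - A₂ 0) * (A₁ 1 - A₄ 1) - (A₄ 1 - A₂ 1) * (A₁ 0 - A₄ 0)) /
      ((A₃ 0 - A₂ 0) * (A₁ 1 - A₄ 1) - (A₃ 1 - A₂ 1) * (A₁ 0 - A₄ 0)) with hs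
    set p0 : ℝ := A₂ 0 + s * (A₃ 0 - A₂ 0) with hp0
    set p1 : ℝ := A₂ 1 + s * (A₃ 1 - A₂ 1) with hp1
    have he2 : (p0 - A₂ 0) * (A₃ 1 - A₂ 1) - (p1 - A₂ 1) * (A₃ 0 - A₂ 0) = 0 := by
      rw [hp0, hp1]; ring
    have he3 : (p0 - A₄ 0) * (A₁ 1 - A₄ 1) - (p1 - A₄ 1) * (A₁ 0 - A₄ 0) = 0 := by
      rw [hp0, hp1, hs]
      linear_combination div_mul_cancel₀
        ((A₄ 0 - A₂ 0) * (A₁ 1 - A₄ 1) - (A₄ 1 - A₂ 1) * (A₁ 0 - A₄ 0)) hD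
    have he2' := he2
    have he3' := he3
    rw [hA₂0, hA₂1, hA₃0, hA₃1] at he2'
    rw [hA₁0, hA₁1, hA₄0, hA₄1] at he3'
    have hz : (1 - t₁) * (1 - t₂) * (1 - t₃) * (1 - t₄) - t₁ * t₂ * t₃ * t₄ = 0 := by
      linear_combination hprod'
    have he1 : (p0 - B₁ 0) * (B₃ 1 - B₁ 1) - (p1 - B₁ 1) * (B₃ 0 - B₁ 0) = 0 := by
      have h := hmaster p0 p1
      rw [he2', he3', hz] at h
      have h' : ((t₃ * B₂ 0 + (1 - t₃) * B₃ 0 - (t₂ * B₁ 0 + (1 - t₂) * B₂ 0)) *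
            (t₁ * B₄ 1 + (1 - t₁) * B₁ 1 - (t₄ * B₃ 1 + (1 - t₄) * B₄ 1)) -
          (t₃ * B₂ 1 + (1 - t₃) * B₃ 1 - (t₂ * B₁ 1 + (1 - t₂) * B₂ 1)) *
            (t₁ * B₄ 0 + (1 - t₁) * B₁ 0 - (t₄ * B₃ 0 + (1 - t₄) * B₄ 0))) *
          ((p0 - B₁ 0) * (B₃ 1 - B₁ 1) - (p1 - B₁ 1) * (B₃ 0 - B₁ 0)) = 0 := by
        simpa using h
      exact (mul_eq_zero.mp h').resolve_left hDexp
    refine ⟨![p0, p1], (mem_line_iff hB13 _).mpr ?_, (mem_line_iff hA23 _).mpr ?_,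
      (mem_line_iff hA41 _).mpr ?_⟩
    · simpa using he1
    · simpa using he2
    · simpa using he3
  · rintro ⟨P, h1, h2, h3⟩
    have he1 := (mem_line_iff hB13 P).mp h1
    have he2 := (mem_line_iff hA23 P).mp h2
    have he3 := (mem_line_iff hA41 P).mp h3
    rw [hA₂0, hA₂1, hA₃0, hA₃1] at he2
    rw [hA₁0, hA₁1, hA₄0, hA₄1] at he3
    have h := hmaster (P 0) (P 1)
    rw [he1, he2, he3] at h
    have h' : -((1 - t₁) * (1 - t₂) * (1 - t₃) * (1 - t₄) - t₁ * t₂ * t₃ * t₄) *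
        ((B₂ 0 - B₁ 0) * (B₃ 1 - B₁ 1) - (B₂ 1 - B₁ 1) * (B₃ 0 - B₁ 0)) *
        ((B₃ 0 - B₁ 0) * (B₄ 1 - B₁ 1) - (B₃ 1 - B₁ 1) * (B₄ 0 - B₁ 0)) = 0 := by
      rw [← h]; simp
    have hz : (1 - t₁) * (1 - t₂) * (1 - t₃) * (1 - t₄) - t₁ * t₂ * t₃ * t₄ = 0 := by
      have h1 := (mul_eq_zero.mp h').resolve_right hd134
      have h2 := (mul_eq_zero.mp h1).resolve_right hd123
      linarith [neg_eq_zero.mp h2]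
    field_simp
    linear_combination hz
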